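/- For Φ(t) = eᵗ − 1, the generalized inverse is Φ⁻¹(u) = log(1+u), and for any measurable set E with 0 < |E| ≤ 1/2, ∫₀^{|E|} (log(1+1/u))^{-1} du/u = ∞. Consequently L^{Φ,1}(ℝⁿ) = {0} for this Φ. -/

import Mathlib

open MeasureTheory ENNReal NNReal

noncomputable section

/-- A Young function `Φ : [0,∞] → [0,∞]`: increasing, convex, `Φ(0)=0`, `Φ(∞)=∞`,
`lim_{t→0}Φ(t)=0`, with `a(Φ)<∞` and `b(Φ)>0`. -/
structure YoungFunction (Φ : ℝ≥0∞ → ℝ≥0∞) : Prop where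
  mono : Monotone Φ
  map_zero : Φ 0 = 0
  map_top : Φ ⊤ = ⊤
  convex : ∀ (a b : ℝ≥0) (x y : ℝ≥0∞), a + b = 1 →
    Φ ((a : ℝ≥0∞) * x + (b : ℝ≥0∞) * y) ≤ (a : ℝ≥0∞) * Φ x + (b : ℝ≥0∞) * Φ y
  tendsto_zero : Filter.Tendsto Φ (nhdsWithin 0 (Set.Ioi 0)) (nhds 0)
  exists_pos : ∃ t : ℝ≥0∞, t ≠ ⊤ ∧ 0 < Φ t
  exists_finite : ∃ t : ℝ≥0∞, 0 < t ∧ Φ t < ⊤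

/-- The generalized inverse `Φ⁻¹(u) = inf{t ≥ 0 : Φ(t) > u}` (with `inf ∅ = ∞`,
so `Φ⁻¹(∞) = ∞`). -/
def yinv (Φ : ℝ≥0∞ → ℝ≥0∞) (u : ℝ≥0∞) : ℝ≥0∞ := sInf {t | u < Φ t}


/-- Decreasing rearrangement `f*(t) = inf{α : m(f,α) ≤ t}` (with `inf ∅ = ∞`). -/
def rearr {n : ℕ} (f : EuclideanSpace ℝ (Fin n) → ℝ) (t : ℝ) : ℝ≥0∞ :=
  sInf {l : ℝ≥0∞ | volume {x | l < ENNReal.ofReal |f x|} ≤ ENNReal.ofReal t}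

/-- The Young function `Φ(t) = eᵗ - 1` (with `Φ(∞) = ∞`). -/
def expYoung : ℝ≥0∞ → ℝ≥0∞ :=
  fun u => if u = ⊤ then ⊤ else ENNReal.ofReal (Real.exp u.toReal - 1)

/-- for `Φ(t)=eᵗ-1` one has `Φ⁻¹(u)=log(1+u)`, the integral
`∫₀^{|E|} (log(1+1/u))⁻¹ du/u` diverges whenever `0 < |E| ≤ 1/2`, and consequently
`L^{Φ,1} = {0}`. -/
lemma yinv_expYoung (u : ℝ≥0∞) (hu : u ≠ ⊤) :
    yinv expYoung u = ENNReal.ofReal (Real.log (1 + u.toReal)) := by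
  have h1 : (0:ℝ) < 1 + u.toReal := by positivity
  have hlog : 0 ≤ Real.log (1 + u.toReal) :=
    Real.log_nonneg (by linarith [ENNReal.toReal_nonneg (a := u)])
  have hset : {t | u < expYoung t} = Set.Ioi (ENNReal.ofReal (Real.log (1 + u.toReal))) := by
    ext t
    simp only [Set.mem_setOf_eq, Set.mem_Ioi]
    rcases eq_or_ne t ⊤ with rfl | ht
    · simp [expYoung, lt_top_iff_ne_top, hu]
    · rw [expYoung]
      simp only [ht, if_false]
      rw [ENNReal.lt_ofReal_iff_toReal_lt hu, ENNReal.ofReal_lt_iff_lt_toReal hlog ht,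
        Real.log_lt_iff_lt_exp h1]
      constructor
      · intro h; linarith
      · intro h; linarith
  rw [yinv, hset, isGLB_Ioi.sInf_eq]


lemma lintegral_image_eq_lintegral_abs_deriv_mul' {s : Set ℝ} {f f' : ℝ → ℝ}
    (hs : MeasurableSet s) (hf' : ∀ x ∈ s, HasDerivWithinAt f (f' x) s x)
    (hf : Set.InjOn f s) (g : ℝ → ℝ≥0∞) :
    ∫⁻ x in f '' s, g x = ∫⁻ x in s, ENNReal.ofReal |f' x| * g (f x) := by
  simpa only [ContinuousLinearMap.det_toSpanSingleton] using
    lintegral_image_eq_lintegral_abs_det_fderiv_mul volume hs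
      (fun x hx => (hf' x hx).hasFDerivWithinAt) hf g

lemma lintegral_inv_two_x (a : ℝ) (ha : 0 < a) :
    ∫⁻ x in Set.Ioi a, ENNReal.ofReal (1/(2*x)) = ⊤ := by
  by_contra h
  have hmeas : Measurable fun x : ℝ => 1/(2*x) := by
    fun_prop
  have hnn : 0 ≤ᵐ[volume.restrict (Set.Ioi a)] fun x : ℝ => 1/(2*x) := by
    filter_upwards [ae_restrict_mem measurableSet_Ioi] with x hx
    have : 0 < x := ha.trans hx
    positivity
  have hint : IntegrableOn (fun x : ℝ => 1/(2*x)) (Set.Ioi a) := by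
    refine ⟨hmeas.aestronglyMeasurable, ?_⟩
    rw [hasFiniteIntegral_iff_ofReal hnn]
    exact lt_top_iff_ne_top.mpr h
  have hint2 : IntegrableOn (fun x : ℝ => x⁻¹) (Set.Ioi a) := by
    refine (hint.const_mul 2).congr ?_
    filter_upwards [ae_restrict_mem measurableSet_Ioi] with x hx
    have hx0 : x ≠ 0 := (ha.trans hx).ne'
    field_simp
  have hrpow : IntegrableOn (fun x : ℝ => x ^ (-1 : ℝ)) (Set.Ioi a) := by
    have heq : (fun x : ℝ => x ^ (-1:ℝ)) = fun x : ℝ => x⁻¹ := by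
      funext x
      rw [show (-1:ℝ) = ((-1:ℤ):ℝ) by norm_num, Real.rpow_intCast, zpow_neg_one]
    rw [heq]; exact hint2
  rw [integrableOn_Ioi_rpow_iff ha] at hrpow
  norm_num at hrpow

lemma div_lemma (c : ℝ) (hc0 : 0 < c) (hc : c ≤ 1/2) :
    ∫⁻ u in Set.Ioo (0:ℝ) c,
      (ENNReal.ofReal (Real.log (1 + 1/u)))⁻¹ * (ENNReal.ofReal u)⁻¹ = ⊤ := by
  rw [eq_top_iff]
  set a : ℝ := -Real.log c with ha_def
  have ha : 0 < a := by
    have : Real.log c < 0 := Real.log_neg hc0 (by linarith)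
    simp only [ha_def]; linarith
  have himg : (fun x : ℝ => Real.exp (-x)) '' Set.Ioi a = Set.Ioo 0 c := by
    ext y
    constructor
    · rintro ⟨x, hx, rfl⟩
      refine ⟨Real.exp_pos _, ?_⟩
      rw [show c = Real.exp (-a) by rw [ha_def, neg_neg, Real.exp_log hc0]]
      exact Real.exp_lt_exp.2 (by simpa using hx)
    · rintro ⟨hy0, hyc⟩
      refine ⟨-Real.log y, ?_, by simp [Real.exp_log hy0]⟩
      have : Real.log y < Real.log c := Real.log_lt_log hy0 hyc
      simp only [Set.mem_Ioi, ha_def]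
      linarith
  have hderiv : ∀ x ∈ Set.Ioi a, HasDerivWithinAt (fun x : ℝ => Real.exp (-x))
      (-Real.exp (-x)) (Set.Ioi a) x := by
    intro x _
    have : HasDerivAt (fun x : ℝ => Real.exp (-x)) (Real.exp (-x) * (-1)) x :=
      (Real.hasDerivAt_exp (-x)).comp x (hasDerivAt_neg x)
    simpa using this.hasDerivWithinAt
  have hinj : Set.InjOn (fun x : ℝ => Real.exp (-x)) (Set.Ioi a) :=
    fun x _ y _ h => by
      have := Real.exp_injective h; linarith
  have hchg := lintegral_image_eq_lintegral_abs_deriv_mul' measurableSet_Ioi hderiv hinj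
      (fun u => ENNReal.ofReal (1/(2 * u * Real.log (1/u))))
  rw [himg] at hchg
  have heqI : ∫⁻ x in Set.Ioi a, ENNReal.ofReal |(-Real.exp (-x))| *
      ENNReal.ofReal (1/(2 * Real.exp (-x) * Real.log (1/Real.exp (-x))))
      = ∫⁻ x in Set.Ioi a, ENNReal.ofReal (1/(2*x)) := by
    refine setLIntegral_congr_fun measurableSet_Ioi
      (fun x hx => ?_)
    have hx0 : 0 < x := ha.trans hx
    have hex : 1/Real.exp (-x) = Real.exp x := by
      rw [Real.exp_neg, one_div, inv_inv]
    rw [abs_neg, abs_of_pos (Real.exp_pos _), hex, Real.log_exp,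
      ← ENNReal.ofReal_mul (Real.exp_pos _).le]
    congr 1
    have hxne : Real.exp (-x) ≠ 0 := (Real.exp_pos _).ne'
    field_simp
  have hlow : ∫⁻ u in Set.Ioo (0:ℝ) c, ENNReal.ofReal (1/(2 * u * Real.log (1/u)))
      ≤ ∫⁻ u in Set.Ioo (0:ℝ) c,
        (ENNReal.ofReal (Real.log (1 + 1/u)))⁻¹ * (ENNReal.ofReal u)⁻¹ := by
    refine setLIntegral_mono' measurableSet_Ioo fun u hu => ?_
    obtain ⟨hu0, huc⟩ := hu
    have hu2 : u ≤ 1/2 := le_trans huc.le hc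
    have hinvu : 0 < 1/u := one_div_pos.2 hu0
    have hlogu : 0 < Real.log (1/u) := Real.log_pos ((one_lt_div hu0).2 (by linarith))
    have hlog1 : 0 < Real.log (1 + 1/u) := Real.log_pos (by linarith)
    have hkey : Real.log (1 + 1/u) ≤ 2 * Real.log (1/u) := by
      have h2 : 1 + 1/u ≤ (1/u)^2 := by
        rw [div_pow, one_pow, le_div_iff₀ (by positivity : (0:ℝ) < u^2)]
        have hexp : (1 + 1/u) * u^2 = u^2 + u := by field_simp
        nlinarith
      calc Real.log (1 + 1/u) ≤ Real.log ((1/u)^2) :=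
            Real.log_le_log (by positivity) h2
        _ = 2 * Real.log (1/u) := by
            rw [Real.log_pow]; push_cast; ring
    rw [← ENNReal.ofReal_inv_of_pos hlog1, ← ENNReal.ofReal_inv_of_pos hu0,
      ← ENNReal.ofReal_mul (by positivity)]
    apply ENNReal.ofReal_le_ofReal
    rw [one_div, ← mul_inv]
    exact inv_anti₀ (by positivity) (by nlinarith)
  calc (⊤ : ℝ≥0∞) = ∫⁻ x in Set.Ioi a, ENNReal.ofReal (1/(2*x)) :=
        (lintegral_inv_two_x a ha).symm
    _ = ∫⁻ u in Set.Ioo (0:ℝ) c, ENNReal.ofReal (1/(2 * u * Real.log (1/u))) := by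
        rw [hchg, heqI]
    _ ≤ _ := hlow

theorem stmt11 (n : ℕ) :
    (∀ u : ℝ≥0∞, u ≠ ⊤ → yinv expYoung u = ENNReal.ofReal (Real.log (1 + u.toReal))) ∧
    (∀ E : Set (EuclideanSpace ℝ (Fin n)), MeasurableSet E →
      0 < volume E → volume E ≤ ENNReal.ofReal (1 / 2) →
      ∫⁻ u in Set.Ioo (0 : ℝ) (volume E).toReal,
        (ENNReal.ofReal (Real.log (1 + 1 / u)))⁻¹ * (ENNReal.ofReal u)⁻¹ = ⊤) ∧
    (∀ f : EuclideanSpace ℝ (Fin n) → ℝ, Measurable f →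
      (∫⁻ t in Set.Ioi (0 : ℝ),
          (yinv expYoung (ENNReal.ofReal t)⁻¹)⁻¹ * rearr f t *
            (ENNReal.ofReal t)⁻¹) ≠ ⊤ →
      f =ᵐ[volume] 0) := by
  refine ⟨fun u hu => yinv_expYoung u hu, ?_, ?_⟩
  · intro E _ hE0 hE2
    have hEtop : volume E ≠ ⊤ := (hE2.trans_lt ENNReal.ofReal_lt_top).ne
    exact div_lemma _ (ENNReal.toReal_pos hE0.ne' hEtop)
      (ENNReal.toReal_le_of_le_ofReal (by norm_num) hE2)
  · intro f hf hint
    by_contra hne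
    have hμ : volume {x : EuclideanSpace ℝ (Fin n) | f x ≠ 0} ≠ 0 := fun h0 => hne (by
      rw [Filter.EventuallyEq, ae_iff]; simpa using h0)
    have hsub : {x : EuclideanSpace ℝ (Fin n) | f x ≠ 0} ⊆
        ⋃ k : ℕ, {x | ((k:ℝ)+1)⁻¹ < |f x|} := by
      intro x hx
      have h0 : 0 < |f x| := abs_pos.2 hx
      obtain ⟨k, hk⟩ := exists_nat_one_div_lt h0
      exact Set.mem_iUnion.2 ⟨k, by rw [Set.mem_setOf_eq, ← one_div]; exact hk⟩
    have hex : ∃ k : ℕ,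
        volume {x : EuclideanSpace ℝ (Fin n) | ((k:ℝ)+1)⁻¹ < |f x|} ≠ 0 := by
      by_contra hall
      push_neg at hall
      exact hμ (measure_mono_null hsub (measure_iUnion_null hall))
    obtain ⟨k, hk⟩ := hex
    set lr : ℝ := ((k:ℝ)+1)⁻¹ with hlr
    have hlr0 : 0 < lr := by positivity
    set l : ℝ≥0∞ := ENNReal.ofReal lr with hl
    have hl0 : 0 < l := ENNReal.ofReal_pos.2 hlr0
    have hltop : l ≠ ⊤ := ENNReal.ofReal_ne_top
    set m : ℝ≥0∞ := volume {x : EuclideanSpace ℝ (Fin n) | l < ENNReal.ofReal |f x|}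
      with hm
    have hm0 : m ≠ 0 := by
      intro h0
      apply hk
      refine measure_mono_null (fun x hx => ?_) h0
      exact (ENNReal.ofReal_lt_ofReal_iff (lt_trans hlr0 hx)).2 hx
    set m' : ℝ≥0∞ := min m (ENNReal.ofReal (1/2)) with hm'
    have hm'0 : 0 < m' :=
      lt_min (pos_iff_ne_zero.2 hm0) (ENNReal.ofReal_pos.2 (by norm_num))
    have hm'top : m' ≠ ⊤ := ((min_le_right _ _).trans_lt ENNReal.ofReal_lt_top).ne
    set c : ℝ := m'.toReal with hc_def
    have hc0 : 0 < c := ENNReal.toReal_pos hm'0.ne' hm'top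
    have hc : c ≤ 1/2 := ENNReal.toReal_le_of_le_ofReal (by norm_num) (min_le_right _ _)
    have hpt : ∀ t ∈ Set.Ioo (0:ℝ) c,
        ((ENNReal.ofReal (Real.log (1 + 1/t)))⁻¹ * (ENNReal.ofReal t)⁻¹) * l ≤
        (yinv expYoung (ENNReal.ofReal t)⁻¹)⁻¹ * rearr f t * (ENNReal.ofReal t)⁻¹ := by
      intro t ht
      obtain ⟨ht0, htc⟩ := ht
      have hot : (0:ℝ≥0∞) < ENNReal.ofReal t := ENNReal.ofReal_pos.2 ht0
      have hinvne : (ENNReal.ofReal t)⁻¹ ≠ ⊤ := ENNReal.inv_ne_top.2 hot.ne'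
      have hyinv : yinv expYoung (ENNReal.ofReal t)⁻¹ =
          ENNReal.ofReal (Real.log (1 + 1/t)) := by
        rw [yinv_expYoung _ hinvne, ENNReal.toReal_inv,
          ENNReal.toReal_ofReal ht0.le, one_div]
      have hr : l ≤ rearr f t := by
        refine le_sInf fun b hb => ?_
        by_contra hbl
        push_neg at hbl
        have hsub2 : {x : EuclideanSpace ℝ (Fin n) | l < ENNReal.ofReal |f x|} ⊆
            {x | b < ENNReal.ofReal |f x|} := fun x hx => lt_trans hbl hx
        have hmt : m ≤ ENNReal.ofReal t := le_trans (measure_mono hsub2) hb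
        have hlt : ENNReal.ofReal t < m' :=
          (ENNReal.ofReal_lt_iff_lt_toReal ht0.le hm'top).2 htc
        exact (hlt.trans_le (min_le_left _ _)).not_ge hmt
      rw [hyinv]
      calc (ENNReal.ofReal (Real.log (1 + 1/t)))⁻¹ * (ENNReal.ofReal t)⁻¹ * l
          = (ENNReal.ofReal (Real.log (1 + 1/t)))⁻¹ * l * (ENNReal.ofReal t)⁻¹ := by
            ring
        _ ≤ (ENNReal.ofReal (Real.log (1 + 1/t)))⁻¹ * rearr f t *
              (ENNReal.ofReal t)⁻¹ :=
            by gcongr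
    have hbig : (⊤:ℝ≥0∞) ≤ ∫⁻ t in Set.Ioi (0:ℝ),
        (yinv expYoung (ENNReal.ofReal t)⁻¹)⁻¹ * rearr f t * (ENNReal.ofReal t)⁻¹ := by
      calc (⊤:ℝ≥0∞) = (∫⁻ t in Set.Ioo (0:ℝ) c,
            (ENNReal.ofReal (Real.log (1 + 1/t)))⁻¹ * (ENNReal.ofReal t)⁻¹) * l := by
            rw [div_lemma c hc0 hc, ENNReal.top_mul hl0.ne']
        _ = ∫⁻ t in Set.Ioo (0:ℝ) c,
            ((ENNReal.ofReal (Real.log (1 + 1/t)))⁻¹ * (ENNReal.ofReal t)⁻¹) * l :=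
            (lintegral_mul_const' l _ hltop).symm
        _ ≤ ∫⁻ t in Set.Ioo (0:ℝ) c,
            (yinv expYoung (ENNReal.ofReal t)⁻¹)⁻¹ * rearr f t *
              (ENNReal.ofReal t)⁻¹ :=
            setLIntegral_mono' measurableSet_Ioo hpt
        _ ≤ _ := lintegral_mono_set Set.Ioo_subset_Ioi_self
    exact hint (top_le_iff.1 hbig)
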